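/- Let $p > 2$ and $q \ge 2p/(p-2)$, and let $z \in W^{2,p}((0,\ell);\mathbb{R}^2)$, $b \in W^{1,p}((0,\ell);\mathbb{R}^2)$ satisfy $\det(z'|b) > 0$ a.e. and $\int_0^\ell (\det(z'|b))^{-q}\,dx_1 < +\infty$. Then there exists $\varepsilon > 0$ such that $\det(z'(x_1)|b(x_1)) \ge \varepsilon$ for all $x_1 \in [0,\ell]$. -/

import Mathlib

open MeasureTheory

lemma aux_meas_rpow (x₀ s : ℝ) : Measurable (fun x : ℝ => |x - x₀| ^ s) := by
  measurability

lemma aux_not_integrableOn_rpow_sing {a c x₀ q : ℝ} (hac : a < c) (hx : x₀ = a ∨ x₀ = c)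
    (hq : 1 ≤ q) : ¬ IntegrableOn (fun x => |x - x₀| ^ (-q)) (Set.Ioo a c) volume := by
  intro h
  have hbase : ¬ IntegrableOn (fun x : ℝ => x ^ (-q)) (Set.Ioo 0 (c - a)) volume := by
    rw [intervalIntegral.integrableOn_Ioo_rpow_iff (by linarith)]
    linarith
  apply hbase
  rcases hx with rfl | rfl
  · have h1 : IntegrableOn (fun x => (x - x₀) ^ (-q)) (Set.Ioo x₀ c) volume :=
      h.congr_fun (fun x hx => by
        dsimp only; rw [abs_of_pos (by linarith [hx.1] : (0:ℝ) < x - x₀)]) measurableSet_Ioo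
    have h2 : IntervalIntegrable (fun x => (x - x₀) ^ (-q)) volume x₀ c :=
      (intervalIntegrable_iff_integrableOn_Ioo_of_le hac.le).2 h1
    have h4 : IntervalIntegrable (fun x : ℝ => x ^ (-q)) volume 0 (c - x₀) := by
      have h3 := h2.comp_add_right x₀
      simpa using h3
    exact (intervalIntegrable_iff_integrableOn_Ioo_of_le (by linarith)).1 h4
  · have h1 : IntegrableOn (fun x => (x₀ - x) ^ (-q)) (Set.Ioo a x₀) volume :=
      h.congr_fun (fun x hx => by
        dsimp only; rw [abs_of_neg (by linarith [hx.2] : x - x₀ < 0), neg_sub]) measurableSet_Ioo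
    have h2 : IntervalIntegrable (fun x => (x₀ - x) ^ (-q)) volume a x₀ :=
      (intervalIntegrable_iff_integrableOn_Ioo_of_le hac.le).2 h1
    have h4 : IntervalIntegrable (fun x : ℝ => x ^ (-q)) volume 0 (x₀ - a) := by
      have h3 := (h2.comp_sub_left x₀).symm
      simpa using h3
    exact (intervalIntegrable_iff_integrableOn_Ioo_of_le (by linarith)).1 h4

/-- One-dimensional uniform positivity of `det(z'|b)`: if `z ∈ W^{2,p}((0,ℓ);ℝ²)` and
`b ∈ W^{1,p}((0,ℓ);ℝ²)` with `p > 2`, `q ≥ 2p/(p-2)`, `det(z'|b) > 0` a.e. and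
`∫_0^ℓ (det(z'|b))^{-q} < ∞`, then `det(z'|b) ≥ ε > 0` on all of `[0,ℓ]`.
Here `det(z'(x)|b(x)) = z'₁(x) b₂(x) - z'₂(x) b₁(x)`. -/
theorem det_columns_uniformly_positive_1d
    (ℓ p q : ℝ) (hℓ : 0 < ℓ) (hp : 2 < p) (hq : 2 * p / (p - 2) ≤ q)
    (z b : ℝ → ℝ × ℝ)
    -- z ∈ W^{2,p}
    (hz1 : ∀ x ∈ Set.Icc 0 ℓ, DifferentiableAt ℝ z x)
    (hz2 : ∀ x ∈ Set.Icc 0 ℓ, DifferentiableAt ℝ (deriv z) x)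
    (hzL : MemLp z (ENNReal.ofReal p) (volume.restrict (Set.Ioo 0 ℓ)))
    (hzL1 : MemLp (deriv z) (ENNReal.ofReal p) (volume.restrict (Set.Ioo 0 ℓ)))
    (hzL2 : MemLp (deriv (deriv z)) (ENNReal.ofReal p) (volume.restrict (Set.Ioo 0 ℓ)))
    -- b ∈ W^{1,p}
    (hb1 : ∀ x ∈ Set.Icc 0 ℓ, DifferentiableAt ℝ b x)
    (hbL : MemLp b (ENNReal.ofReal p) (volume.restrict (Set.Ioo 0 ℓ)))
    (hbL1 : MemLp (deriv b) (ENNReal.ofReal p) (volume.restrict (Set.Ioo 0 ℓ)))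
    -- det(z'|b) > 0 a.e. and the negative power is integrable
    (hdet : ∀ᵐ x ∂(volume.restrict (Set.Ioo 0 ℓ)),
      0 < (deriv z x).1 * (b x).2 - (deriv z x).2 * (b x).1)
    (hint : IntegrableOn
      (fun x => ((deriv z x).1 * (b x).2 - (deriv z x).2 * (b x).1) ^ (-q))
      (Set.Ioo 0 ℓ) volume) :
    ∃ ε > 0, ∀ x ∈ Set.Icc 0 ℓ,
      ε ≤ (deriv z x).1 * (b x).2 - (deriv z x).2 * (b x).1 := by
  set f : ℝ → ℝ := fun x => (deriv z x).1 * (b x).2 - (deriv z x).2 * (b x).1 with hf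
  have hfd : ∀ x ∈ Set.Icc 0 ℓ, DifferentiableAt ℝ f x := fun x hx =>
    ((hz2 x hx).fst.mul (hb1 x hx).snd).sub ((hz2 x hx).snd.mul (hb1 x hx).fst)
  have hfc : ContinuousOn f (Set.Icc 0 ℓ) := fun x hx =>
    (hfd x hx).continuousAt.continuousWithinAt
  obtain ⟨x₀, hx₀, hmin⟩ :=
    isCompact_Icc.exists_isMinOn ⟨0, Set.left_mem_Icc.2 hℓ.le⟩ hfc
  rcases lt_or_ge 0 (f x₀) with hpos | hnonpos
  · exact ⟨f x₀, hpos, fun x hx => hmin hx⟩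
  exfalso
  have hq2 : 2 < q := lt_of_lt_of_le (by rw [lt_div_iff₀ (by linarith)]; linarith) hq
  -- local linear bound from differentiability at x₀
  have hder := (hfd x₀ hx₀).hasDerivAt
  set C : ℝ := |deriv f x₀| + 1 with hC
  have hCpos : 0 < C := by positivity
  have hev : ∀ᶠ x in nhds x₀, f x ≤ C * |x - x₀| := by
    have hlo := (hasDerivAt_iff_isLittleO.1 hder).def one_pos
    filter_upwards [hlo] with x hx
    have h1 : f x - f x₀ - (x - x₀) * deriv f x₀ ≤ |x - x₀| := by
      calc f x - f x₀ - (x - x₀) * deriv f x₀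
          ≤ ‖f x - f x₀ - (x - x₀) * deriv f x₀‖ := le_abs_self _
        _ ≤ 1 * ‖x - x₀‖ := by simpa [smul_eq_mul] using hx
        _ = |x - x₀| := by rw [one_mul, Real.norm_eq_abs]
    have h2 : (x - x₀) * deriv f x₀ ≤ |x - x₀| * |deriv f x₀| := by
      calc (x - x₀) * deriv f x₀ ≤ |(x - x₀) * deriv f x₀| := le_abs_self _
        _ = |x - x₀| * |deriv f x₀| := abs_mul _ _
    have hCx : C * |x - x₀| = |x - x₀| * |deriv f x₀| + |x - x₀| := by ring
    linarith
  obtain ⟨δ, hδ, hball⟩ := Metric.eventually_nhds_iff.1 hev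
  -- choose an open interval inside (0,ℓ) with x₀ as an endpoint, inside the δ-ball
  obtain ⟨a, c, hac, hsub, hend, hbd⟩ :
      ∃ a c : ℝ, a < c ∧ Set.Ioo a c ⊆ Set.Ioo 0 ℓ ∧ (x₀ = a ∨ x₀ = c) ∧
        ∀ x ∈ Set.Ioo a c, |x - x₀| < δ := by
    rcases lt_or_eq_of_le hx₀.2 with hlt | rfl
    · refine ⟨x₀, min ℓ (x₀ + δ), lt_min hlt (by linarith), ?_, Or.inl rfl, ?_⟩
      · intro x hx
        exact ⟨lt_of_le_of_lt hx₀.1 hx.1, lt_of_lt_of_le hx.2 (min_le_left _ _)⟩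
      · intro x hx
        rw [abs_of_pos (by linarith [hx.1])]
        have := lt_of_lt_of_le hx.2 (min_le_right _ _)
        linarith
    · refine ⟨max 0 (x₀ - δ), x₀, max_lt hℓ (by linarith), ?_, Or.inr rfl, ?_⟩
      · intro x hx
        exact ⟨lt_of_le_of_lt (le_max_left _ _) hx.1, hx.2⟩
      · intro x hx
        rw [abs_of_neg (by linarith [hx.2]), neg_sub]
        have := lt_of_le_of_lt (le_max_right _ _) hx.1
        linarith
  set T := Set.Ioo a c with hT
  have hTm : MeasurableSet T := measurableSet_Ioo
  have hintT : IntegrableOn (fun x => f x ^ (-q)) T volume := hint.mono_set hsub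
  have hdetT : ∀ᵐ x ∂(volume.restrict T), 0 < f x :=
    ae_restrict_of_ae_restrict_of_subset hsub hdet
  have hmem : ∀ᵐ x ∂(volume.restrict T), x ∈ T := ae_restrict_mem hTm
  set g : ℝ → ℝ := fun x => C ^ (-q) * |x - x₀| ^ (-q) with hg
  have hgm : AEStronglyMeasurable g (volume.restrict T) := by
    exact (measurable_const.mul (aux_meas_rpow x₀ (-q))).aestronglyMeasurable
  have hbound : ∀ᵐ x ∂(volume.restrict T), ‖g x‖ ≤ ‖f x ^ (-q)‖ := by
    filter_upwards [hdetT, hmem] with x hxf hxT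
    have hfb : f x ≤ C * |x - x₀| := hball (by rw [Real.dist_eq]; exact hbd x hxT)
    have h1 : (C * |x - x₀|) ^ (-q) ≤ f x ^ (-q) :=
      Real.rpow_le_rpow_of_nonpos hxf hfb (by linarith)
    rw [Real.norm_eq_abs, Real.norm_eq_abs,
      abs_of_nonneg (Real.rpow_nonneg hxf.le _),
      abs_of_nonneg (mul_nonneg (Real.rpow_nonneg hCpos.le _)
        (Real.rpow_nonneg (abs_nonneg _) _))]
    calc g x = (C * |x - x₀|) ^ (-q) := (Real.mul_rpow hCpos.le (abs_nonneg _)).symm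
      _ ≤ f x ^ (-q) := h1
  have hgint : Integrable g (volume.restrict T) := MeasureTheory.Integrable.mono hintT hgm hbound
  have hCq : IsUnit (C ^ (-q)) :=
    isUnit_iff_ne_zero.2 (ne_of_gt (Real.rpow_pos_of_pos hCpos _))
  have habs_int : IntegrableOn (fun x => |x - x₀| ^ (-q)) T volume :=
    (integrable_const_mul_iff hCq _).1 hgint
  exact aux_not_integrableOn_rpow_sing hac hend (by linarith) habs_int
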